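/- Let T be a mesh element with simplicial face-based partition P_T = {P_{TF} : F ∈ F_T}, and define the lifting L_{TF}: U_T^{k,l} → RT^{k+1}(P_{TF}) by (L_{TF}û_T, η)_{P_{TF}} = -((∇r_T - G_T)û_T - ∇δ_Tû_T, η)_{P_{TF}} + ((δ_{TF}-δ_T)û_T, η·n_{TF})_F for all η ∈ RT^{k+1}(P_{TF}), and set S_T := ∑_{F∈F_T} L_{TF} (each lifting extended by zero outside P_{TF}). Then for all φ ∈ P^k(T)^d and all û_T ∈ U_T^{k,l}: (S_T û_T, φ)_T = 0. -/

import Mathlib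

open MeasureTheory Finset

/-- Membership in the local polynomial space `P^ℓ`. -/
def MemPolySpace (d ℓ : ℕ) (f : (Fin d → ℝ) → ℝ) : Prop :=
  ∃ P : MvPolynomial (Fin d) ℝ, P.totalDegree ≤ ℓ ∧ ∀ x, f x = MvPolynomial.eval x P

/-- Membership in `P^ℓ` for an integer degree `ℓ`, with the convention `P^{-1} = {0}`. -/
def MemPolySpaceInt (d : ℕ) (ℓ : ℤ) (f : (Fin d → ℝ) → ℝ) : Prop :=
  if ℓ < 0 then (∀ x, f x = 0) else MemPolySpace d ℓ.toNat f

/-- `i`-th partial derivative. -/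
noncomputable def pderiv' (d : ℕ) (f : (Fin d → ℝ) → ℝ) (i : Fin d) (x : Fin d → ℝ) : ℝ :=
  fderiv ℝ f x (Pi.single i 1)

/-- Laplacian via iterated partial derivatives. -/
noncomputable def lap' (d : ℕ) (f : (Fin d → ℝ) → ℝ) (x : Fin d → ℝ) : ℝ :=
  ∑ i, pderiv' d (fun y => pderiv' d f i y) i x

/-- Membership in the Raviart–Thomas–Nédélec space `RT^m = P^m(ℝ^d)^d + x P^m(ℝ^d)`. -/
def MemRT (d m : ℕ) (η : Fin d → (Fin d → ℝ) → ℝ) : Prop :=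
  ∃ (p : Fin d → (Fin d → ℝ) → ℝ) (q : (Fin d → ℝ) → ℝ),
    (∀ i, MemPolySpace d m (p i)) ∧ MemPolySpace d m q ∧
      ∀ i x, η i x = p i x + x i * q x


section Aux

open MvPolynomial

theorem myHasFDerivAt_eval (d : ℕ) (P : MvPolynomial (Fin d) ℝ) (x : Fin d → ℝ) :
    HasFDerivAt (fun y => eval y P)
      (∑ j, (eval x (pderiv j P)) • (ContinuousLinearMap.proj j : (Fin d → ℝ) →L[ℝ] ℝ)) x := by
  induction P using MvPolynomial.induction_on with
  | C a =>
      simp only [eval_C, pderiv_C, map_zero, zero_smul, Finset.sum_const_zero]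
      exact hasFDerivAt_const a x
  | add p q hp hq =>
      have := hp.add hq
      simp only [map_add] at this ⊢
      refine this.congr_fderiv ?_
      rw [← Finset.sum_add_distrib]
      congr 1; ext j; rw [add_smul]
  | mul_X p j hp =>
      have hX : HasFDerivAt (fun y : Fin d → ℝ => y j)
          (ContinuousLinearMap.proj j : (Fin d → ℝ) →L[ℝ] ℝ) x := by
        exact (ContinuousLinearMap.proj (R := ℝ) (φ := fun _ : Fin d => ℝ) j).hasFDerivAt
      have hmul := hp.mul' hX
      simp only [eval_mul, eval_X]
      refine hmul.congr_fderiv ?_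
      ext v
      classical
      have hkey : ∀ i : Fin d, eval x (pderiv i (p * X j)) =
          x j * eval x (pderiv i p) + (if j = i then eval x p else 0) := by
        intro i
        rw [pderiv_mul, pderiv_X]
        simp only [map_add, map_mul, eval_X]
        by_cases h : j = i <;> simp [Pi.single_apply, h, mul_comm]
      simp only [ContinuousLinearMap.add_apply, ContinuousLinearMap.smul_apply,
        ContinuousLinearMap.proj_apply, ContinuousLinearMap.smulRight_apply,
        ContinuousLinearMap.coe_sum', Finset.sum_apply, smul_eq_mul, hkey]
      rw [Finset.sum_congr rfl (fun i _ => add_mul _ _ _), Finset.sum_add_distrib]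
      simp only [ite_mul, zero_mul, Finset.sum_ite_eq, Finset.mem_univ, if_true]
      rw [op_smul_eq_mul]
      rw [Finset.sum_mul]
      rw [Finset.sum_congr rfl (fun i (_ : i ∈ Finset.univ) => by ring :
        ∀ i ∈ Finset.univ, x j * eval x (pderiv i p) * v i = eval x (pderiv i p) * v i * x j)]
      ring

theorem myPderiv'_eval (d : ℕ) (P : MvPolynomial (Fin d) ℝ) (i : Fin d) (x : Fin d → ℝ) :
    pderiv' d (fun y => eval y P) i x = eval x (pderiv i P) := by
  rw [pderiv', (myHasFDerivAt_eval d P x).fderiv]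
  simp only [ContinuousLinearMap.coe_sum', Finset.sum_apply, ContinuousLinearMap.smul_apply,
    ContinuousLinearMap.proj_apply, Pi.single_apply, smul_eq_mul]
  rw [Finset.sum_eq_single i] <;> simp +contextual [eq_comm]

theorem myPderiv_eq_zero_of_totalDegree_eq_zero {d : ℕ} {P : MvPolynomial (Fin d) ℝ}
    (h : P.totalDegree = 0) (i : Fin d) : pderiv i P = 0 := by
  conv_lhs => rw [P.as_sum]
  rw [map_sum]
  refine Finset.sum_eq_zero fun s hs => ?_
  rw [pderiv_monomial]
  have : s i = 0 := (MvPolynomial.totalDegree_eq_zero_iff _ P).mp h s hs i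
  simp [this]

theorem myTotalDegree_pderiv_le {d : ℕ} {P : MvPolynomial (Fin d) ℝ} {n : ℕ}
    (h : P.totalDegree ≤ n + 1) (i : Fin d) : (pderiv i P).totalDegree ≤ n := by
  conv_lhs => rw [P.as_sum]
  rw [map_sum]
  refine MvPolynomial.totalDegree_finsetSum_le fun s hs => ?_
  rw [pderiv_monomial]
  rcases Nat.eq_zero_or_pos (s i) with h0 | h1
  · simp [h0]
  · refine (MvPolynomial.totalDegree_monomial_le _ _).trans ?_
    have hle : Finsupp.single i 1 ≤ s := Finsupp.single_le_iff.mpr h1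
    have hsum : s.sum (fun _ e => e) ≤ n + 1 :=
      (MvPolynomial.le_totalDegree (by simpa using hs)).trans h
    have hdecomp : (s - Finsupp.single i 1) + Finsupp.single i 1 = s := tsub_add_cancel_of_le hle
    have hsum2 : ((s - Finsupp.single i 1) + Finsupp.single i 1).sum (fun _ e => e)
        = s.sum (fun _ e => e) := by rw [hdecomp]
    rw [Finsupp.sum_add_index' (fun _ => rfl) (fun _ _ _ => rfl),
      Finsupp.sum_single_index rfl] at hsum2
    show (s - Finsupp.single i 1).sum (fun _ e => e) ≤ n
    omega

theorem MemPolySpace.continuous {d m : ℕ} {f : (Fin d → ℝ) → ℝ}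
    (hf : MemPolySpace d m f) : Continuous f := by
  obtain ⟨P, _, hP⟩ := hf
  have : f = fun x => eval x P := funext hP
  rw [this]
  exact MvPolynomial.continuous_eval (p := P)

theorem MemPolySpace.mono {d m m' : ℕ} {f : (Fin d → ℝ) → ℝ}
    (hf : MemPolySpace d m f) (h : m ≤ m') : MemPolySpace d m' f := by
  obtain ⟨P, hd, hP⟩ := hf
  exact ⟨P, hd.trans h, hP⟩

theorem memPolySpace_zero {d m : ℕ} : MemPolySpace d m (fun _ => (0 : ℝ)) :=
  ⟨0, by simp, fun x => by simp⟩

theorem MemPolySpace.add {d m : ℕ} {f g : (Fin d → ℝ) → ℝ}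
    (hf : MemPolySpace d m f) (hg : MemPolySpace d m g) :
    MemPolySpace d m (fun x => f x + g x) := by
  obtain ⟨P, hPd, hP⟩ := hf; obtain ⟨Q, hQd, hQ⟩ := hg
  exact ⟨P + Q, (MvPolynomial.totalDegree_add P Q).trans (max_le hPd hQd),
    fun x => by simp [hP x, hQ x]⟩

theorem MemPolySpace.mul_const {d m : ℕ} {f : (Fin d → ℝ) → ℝ} (c : ℝ)
    (hf : MemPolySpace d m f) : MemPolySpace d m (fun x => f x * c) := by
  obtain ⟨P, hPd, hP⟩ := hf
  exact ⟨c • P, (MvPolynomial.totalDegree_smul_le c P).trans hPd,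
    fun x => by simp [hP x, mul_comm]⟩

theorem memPolySpace_sum {d m : ℕ} {ι : Type*} (s : Finset ι) {f : ι → (Fin d → ℝ) → ℝ}
    (hf : ∀ i ∈ s, MemPolySpace d m (f i)) :
    MemPolySpace d m (fun x => ∑ i ∈ s, f i x) := by
  classical
  induction s using Finset.induction_on with
  | empty => simpa using memPolySpace_zero
  | insert _ _ hni ih =>
      rename_i a s
      simp only [Finset.sum_insert hni]
      exact (hf a (Finset.mem_insert_self a s)).add
        (ih fun i hi => hf i (Finset.mem_insert_of_mem hi))

theorem MemPolySpace.pderiv'_mem {d m : ℕ} {f : (Fin d → ℝ) → ℝ}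
    (hf : MemPolySpace d m f) (i : Fin d) :
    MemPolySpace d (m - 1) (fun x => pderiv' d f i x) := by
  obtain ⟨P, hPd, hP⟩ := hf
  have hfe : f = fun y => eval y P := funext hP
  refine ⟨pderiv i P, ?_, fun x => ?_⟩
  case refine_2 => show pderiv' d f i x = _; rw [hfe, myPderiv'_eval]
  case refine_1 => ?_
  rcases Nat.eq_zero_or_pos m with hm | hm
  · subst hm
    rw [myPderiv_eq_zero_of_totalDegree_eq_zero (Nat.le_zero.mp hPd) i]
    simp
  · have : P.totalDegree ≤ (m - 1) + 1 := by omega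
    exact myTotalDegree_pderiv_le this i

theorem MemPolySpace.pderiv'_zero {d : ℕ} {f : (Fin d → ℝ) → ℝ}
    (hf : MemPolySpace d 0 f) (i : Fin d) (x : Fin d → ℝ) : pderiv' d f i x = 0 := by
  obtain ⟨P, hPd, hP⟩ := hf
  have hfe : f = fun y => eval y P := funext hP
  rw [hfe, myPderiv'_eval, myPderiv_eq_zero_of_totalDegree_eq_zero (Nat.le_zero.mp hPd) i]
  simp

theorem MemPolySpaceInt.exists_mem {d : ℕ} {l : ℤ} {f : (Fin d → ℝ) → ℝ}
    (hf : MemPolySpaceInt d l f) : ∃ m, MemPolySpace d m f := by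
  unfold MemPolySpaceInt at hf
  split_ifs at hf with h
  · exact ⟨0, 0, by simp, fun x => by simp [hf x]⟩
  · exact ⟨l.toNat, hf⟩

end Aux

/-- **Orthogonality (property S2) of the Raviart–Thomas–Nédélec stabilisation.**
Let `T` be a mesh element with face-based simplicial partition `{P_{TF}}`, and let
`L_{TF} : U_T^{k,l} → RT^{k+1}(P_{TF})` be the lifting defined by
`(L_{TF}û_T, η)_{P_{TF}} = -((∇r_T-G_T)û_T - ∇δ_Tû_T, η)_{P_{TF}} + ((δ_{TF}-δ_T)û_T, η·n_{TF})_F`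
for all `η ∈ RT^{k+1}(P_{TF})`, each lifting being extended by zero outside `P_{TF}`;
set `S_T := ∑_F L_{TF}`.  Then `(S_T û_T, φ)_T = 0` for all `φ ∈ P^k(T)^d`. -/
theorem rt_stabilisation_orthogonality (d k : ℕ) (l : ℤ)
    (hl : l = (k : ℤ) - 1 ∨ l = (k : ℤ) ∨ l = (k : ℤ) + 1)
    (T : Set (Fin d → ℝ))
    (hTopen : IsOpen T) (hTbdd : Bornology.IsBounded T) (hTpos : 0 < volume T)
    (ι : Type) [Fintype ι]
    (μF : ι → Measure (Fin d → ℝ)) (hμFfin : ∀ F, IsFiniteMeasure (μF F))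
    (hμFsupp : ∀ F, μF F (frontier T)ᶜ = 0)
    (nF : ι → Fin d → ℝ)
    -- the face-based partition P_T = {PF F : F ∈ ι} of T
    (PF : ι → Set (Fin d → ℝ)) (hPFmeas : ∀ F, MeasurableSet (PF F))
    (hPFsub : ∀ F, PF F ⊆ T)
    (hPFdisj : ∀ F F', F ≠ F' → volume (PF F ∩ PF F') = 0)
    (hPFcover : volume (T \ ⋃ F, PF F) = 0)
    -- integration by parts on T against polynomial fields
    (hIBP : ∀ f : (Fin d → ℝ) → ℝ, (∃ m, MemPolySpace d m f) →
      ∀ φ : Fin d → (Fin d → ℝ) → ℝ, (∀ i, ∃ m, MemPolySpace d m (φ i)) →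
        ∫ x in T, ∑ i, pderiv' d f i x * φ i x =
          -(∫ x in T, f x * ∑ i, pderiv' d (φ i) i x) +
            ∑ F, ∫ x, f x * ∑ i, φ i x * nF F i ∂(μF F))
    -- the local unknowns û_T ∈ U_T^{k,l}
    (vT : (Fin d → ℝ) → ℝ) (hvT : MemPolySpaceInt d l vT)
    (vF : ι → (Fin d → ℝ) → ℝ) (hvF : ∀ F, MemPolySpace d k (vF F))
    -- the gradient reconstruction G_T û_T
    (G : Fin d → (Fin d → ℝ) → ℝ) (hG : ∀ i, MemPolySpace d k (G i))
    (hGdef : ∀ φ : Fin d → (Fin d → ℝ) → ℝ, (∀ i, MemPolySpace d k (φ i)) →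
      ∫ x in T, ∑ i, G i x * φ i x =
        -(∫ x in T, vT x * ∑ i, pderiv' d (φ i) i x) +
          ∑ F, ∫ x, vF F x * ∑ i, φ i x * nF F i ∂(μF F))
    -- the potential reconstruction r_T û_T ∈ P^{k+1}(T)
    (r : (Fin d → ℝ) → ℝ) (hr : MemPolySpace d (k + 1) r)
    (hrdef : ∀ w, MemPolySpace d (k + 1) w →
      ∫ x in T, ∑ i, pderiv' d r i x * pderiv' d w i x =
        -(∫ x in T, vT x * lap' d w x) +
          ∑ F, ∫ x, vF F x * ∑ i, pderiv' d w i x * nF F i ∂(μF F))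
    (hravg : ∫ x in T, (r x - vT x) = 0)
    -- the difference operators
    (δT : (Fin d → ℝ) → ℝ) (hδT : MemPolySpaceInt d l δT)
    (hδTdef : ∀ w, MemPolySpaceInt d l w →
      ∫ x in T, (δT x - (r x - vT x)) * w x = 0)
    (δF : ι → (Fin d → ℝ) → ℝ) (hδF : ∀ F, MemPolySpace d k (δF F))
    (hδFdef : ∀ F, ∀ w, MemPolySpace d k w →
      ∫ x, (δF F x - (r x - vF F x)) * w x ∂(μF F) = 0)
    -- the liftings L_{TF} û_T ∈ RT^{k+1}(P_{TF}), extended by zero outside P_{TF}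
    (L : ι → Fin d → (Fin d → ℝ) → ℝ)
    (hLRT : ∀ F, ∃ η : Fin d → (Fin d → ℝ) → ℝ, MemRT d (k + 1) η ∧
      (∀ x ∈ PF F, ∀ i, L F i x = η i x) ∧ ∀ x ∉ PF F, ∀ i, L F i x = 0)
    (hLdef : ∀ F, ∀ η : Fin d → (Fin d → ℝ) → ℝ, MemRT d (k + 1) η →
      ∫ x in PF F, ∑ i, L F i x * η i x =
        -(∫ x in PF F, ∑ i, (pderiv' d r i x - G i x - pderiv' d δT i x) * η i x) +
          ∫ x, (δF F x - δT x) * ∑ i, η i x * nF F i ∂(μF F)) :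
    -- conclusion: (S_T û_T, φ)_T = 0 for all φ ∈ P^k(T)^d
    ∀ φ : Fin d → (Fin d → ℝ) → ℝ, (∀ i, MemPolySpace d k (φ i)) →
      ∫ x in T, ∑ i, (∑ F, L F i x) * φ i x = 0 := by
  intro φ hφ
  classical
  -- infrastructure
  have hclos : IsCompact (closure T) := hTbdd.isCompact_closure
  have intT : ∀ f : (Fin d → ℝ) → ℝ, Continuous f → IntegrableOn f T volume := fun f hf =>
    (hf.continuousOn.integrableOn_compact hclos).mono_set subset_closure
  have intμ : ∀ (F : ι) (f : (Fin d → ℝ) → ℝ), Continuous f → Integrable f (μF F) := by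
    intro F f hf
    haveI := hμFfin F
    obtain ⟨C, hC⟩ := hclos.exists_bound_of_continuousOn hf.continuousOn
    refine ⟨hf.aestronglyMeasurable, HasFiniteIntegral.of_bounded (C := C) ?_⟩
    have hae : ∀ᵐ x ∂(μF F), x ∈ frontier T := by
      rw [MeasureTheory.ae_iff]
      exact hμFsupp F
    filter_upwards [hae] with x hx
    exact hC x (frontier_subset_closure hx)
  -- continuity facts
  have hφc : ∀ i, Continuous (φ i) := fun i => (hφ i).continuous
  have hrc : Continuous r := hr.continuous
  have hGc : ∀ i, Continuous (G i) := fun i => (hG i).continuous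
  have hvFc : ∀ F, Continuous (vF F) := fun F => (hvF F).continuous
  have hδFc : ∀ F, Continuous (δF F) := fun F => (hδF F).continuous
  obtain ⟨mv, hvTm⟩ := hvT.exists_mem
  have hvTc : Continuous vT := hvTm.continuous
  obtain ⟨mδ, hδTm⟩ := hδT.exists_mem
  have hδTc : Continuous δT := hδTm.continuous
  have hdrc : ∀ i, Continuous (fun x => pderiv' d r i x) := fun i =>
    (hr.pderiv'_mem i).continuous
  have hdδTc : ∀ i, Continuous (fun x => pderiv' d δT i x) := fun i =>
    (hδTm.pderiv'_mem i).continuous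
  have hdφm : ∀ i j : Fin d, MemPolySpace d (k - 1) (fun x => pderiv' d (φ i) j x) :=
    fun i j => (hφ i).pderiv'_mem j
  have hdφc : Continuous (fun x => ∑ i, pderiv' d (φ i) i x) :=
    continuous_finset_sum _ fun i _ => (hdφm i i).continuous
  -- the divergence of φ is an admissible test function for hδTdef
  have hdφmem : MemPolySpaceInt d l (fun x => ∑ i, pderiv' d (φ i) i x) := by
    unfold MemPolySpaceInt
    split_ifs with hneg
    · have hk : k = 0 := by rcases hl with h | h | h <;> omega
      intro x
      refine Finset.sum_eq_zero fun i _ => ?_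
      have h0 : MemPolySpace d 0 (φ i) := by rw [← hk]; exact hφ i
      exact h0.pderiv'_zero i x
    · have hkl : k - 1 ≤ l.toNat := by rcases hl with h | h | h <;> omega
      exact memPolySpace_sum Finset.univ fun i _ => (hdφm i i).mono hkl
  -- φ belongs to RT^{k+1}
  have hφRT : MemRT d (k + 1) φ :=
    ⟨φ, fun _ => 0, fun i => (hφ i).mono (Nat.le_succ k), memPolySpace_zero,
      fun i x => by ring⟩
  -- Step 1: each L F is supported in PF F
  have hstep1 : ∀ F : ι, IntegrableOn (fun x => ∑ i, L F i x * φ i x) T volume ∧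
      ∫ x in T, ∑ i, L F i x * φ i x = ∫ x in PF F, ∑ i, L F i x * φ i x := by
    intro F
    obtain ⟨η, ⟨p, q, hp, hq, hpq⟩, hηeq, hη0⟩ := hLRT F
    have hηc : ∀ i, Continuous (η i) := by
      intro i
      have : η i = fun x => p i x + x i * q x := funext (hpq i)
      rw [this]
      exact ((hp i).continuous).add ((continuous_apply i).mul hq.continuous)
    have hgc : Continuous (fun x => ∑ i, η i x * φ i x) :=
      continuous_finset_sum _ fun i _ => (hηc i).mul (hφc i)
    have hind : (fun x => ∑ i, L F i x * φ i x)
        = (PF F).indicator (fun x => ∑ i, η i x * φ i x) := by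
      funext x
      show ∑ i, L F i x * φ i x = (PF F).indicator (fun x => ∑ i, η i x * φ i x) x
      by_cases hx : x ∈ PF F
      · rw [Set.indicator_of_mem hx]
        exact Finset.sum_congr rfl fun i _ => by rw [hηeq x hx i]
      · rw [Set.indicator_of_notMem hx]
        exact Finset.sum_eq_zero fun i _ => by rw [hη0 x hx i, zero_mul]
    constructor
    · rw [hind]
      exact (intT _ hgc).indicator (hPFmeas F)
    · rw [hind, setIntegral_indicator (hPFmeas F),
        Set.inter_eq_self_of_subset_right (hPFsub F)]
      refine setIntegral_congr_fun (hPFmeas F) fun x hx => ?_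
      show ∑ i, η i x * φ i x = (PF F).indicator (fun x => ∑ i, η i x * φ i x) x
      rw [Set.indicator_of_mem hx]
  -- Step 2: split the integral over F
  have hLsplit : ∫ x in T, ∑ i, (∑ F, L F i x) * φ i x
      = ∑ F, ∫ x in T, ∑ i, L F i x * φ i x := by
    have hpt : ∀ x, ∑ i, (∑ F, L F i x) * φ i x = ∑ F, ∑ i, L F i x * φ i x := by
      intro x
      calc ∑ i, (∑ F, L F i x) * φ i x = ∑ i, ∑ F, L F i x * φ i x :=
            Finset.sum_congr rfl fun i _ => Finset.sum_mul _ _ _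
        _ = ∑ F, ∑ i, L F i x * φ i x := Finset.sum_comm
    simp_rw [hpt]
    exact integral_finset_sum _ fun F _ => (hstep1 F).1
  -- Step 3: the partition identity for the volumetric term
  have hc_h : Continuous (fun x => ∑ i, (pderiv' d r i x - G i x - pderiv' d δT i x) * φ i x) :=
    continuous_finset_sum _ fun i _ => (((hdrc i).sub (hGc i)).sub (hdδTc i)).mul (hφc i)
  have hpart : ∑ F, ∫ x in PF F, ∑ i, (pderiv' d r i x - G i x - pderiv' d δT i x) * φ i x
      = ∫ x in T, ∑ i, (pderiv' d r i x - G i x - pderiv' d δT i x) * φ i x := by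
    have hU := integral_iUnion_ae (μ := volume)
      (f := fun x => ∑ i, (pderiv' d r i x - G i x - pderiv' d δT i x) * φ i x)
      (fun F => (hPFmeas F).nullMeasurableSet)
      (fun F F' hne => hPFdisj F F' hne)
      ((intT _ hc_h).mono_set (Set.iUnion_subset hPFsub))
    rw [tsum_fintype] at hU
    rw [← hU]
    apply setIntegral_congr_set
    rw [MeasureTheory.ae_eq_set]
    constructor
    · have hempty : (⋃ F, PF F) \ T = ∅ := Set.diff_eq_empty.mpr (Set.iUnion_subset hPFsub)
      simp [hempty]
    · exact hPFcover
  -- Step 4: expand the volumetric term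
  have hA : IntegrableOn (fun x => ∑ i, pderiv' d r i x * φ i x) T volume :=
    intT _ (continuous_finset_sum _ fun i _ => (hdrc i).mul (hφc i))
  have hB : IntegrableOn (fun x => ∑ i, G i x * φ i x) T volume :=
    intT _ (continuous_finset_sum _ fun i _ => (hGc i).mul (hφc i))
  have hC : IntegrableOn (fun x => ∑ i, pderiv' d δT i x * φ i x) T volume :=
    intT _ (continuous_finset_sum _ fun i _ => (hdδTc i).mul (hφc i))
  have hexp : ∫ x in T, ∑ i, (pderiv' d r i x - G i x - pderiv' d δT i x) * φ i x
      = (∫ x in T, ∑ i, pderiv' d r i x * φ i x) - (∫ x in T, ∑ i, G i x * φ i x)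
        - (∫ x in T, ∑ i, pderiv' d δT i x * φ i x) := by
    have hpt : ∀ x, ∑ i, (pderiv' d r i x - G i x - pderiv' d δT i x) * φ i x
        = (∑ i, pderiv' d r i x * φ i x) - (∑ i, G i x * φ i x)
          - (∑ i, pderiv' d δT i x * φ i x) := by
      intro x
      rw [← Finset.sum_sub_distrib, ← Finset.sum_sub_distrib]
      exact Finset.sum_congr rfl fun i _ => by ring
    have hAB : IntegrableOn
        (fun x => (∑ i, pderiv' d r i x * φ i x) - ∑ i, G i x * φ i x) T volume := hA.sub hB
    simp_rw [hpt]
    rw [integral_sub hAB hC, integral_sub hA hB]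
  -- Step 5: integration by parts identities
  have hIBPr := hIBP r ⟨k + 1, hr⟩ φ (fun i => ⟨k, hφ i⟩)
  have hIBPδ := hIBP δT ⟨mδ, hδTm⟩ φ (fun i => ⟨k, hφ i⟩)
  have hGv := hGdef φ hφ
  -- Step 6: the volumetric residual vanishes
  have hvol0 : (∫ x in T, r x * ∑ i, pderiv' d (φ i) i x)
      - (∫ x in T, vT x * ∑ i, pderiv' d (φ i) i x)
      - (∫ x in T, δT x * ∑ i, pderiv' d (φ i) i x) = 0 := by
    have ha := intT (fun x => r x * ∑ i, pderiv' d (φ i) i x) (hrc.mul hdφc)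
    have hb := intT (fun x => vT x * ∑ i, pderiv' d (φ i) i x) (hvTc.mul hdφc)
    have hc := intT (fun x => δT x * ∑ i, pderiv' d (φ i) i x) (hδTc.mul hdφc)
    have hab : IntegrableOn
        (fun x => r x * (∑ i, pderiv' d (φ i) i x) - vT x * (∑ i, pderiv' d (φ i) i x))
        T volume := ha.sub hb
    have hptv : (fun x => r x * (∑ i, pderiv' d (φ i) i x)
        - vT x * (∑ i, pderiv' d (φ i) i x) - δT x * (∑ i, pderiv' d (φ i) i x))
        = fun x => -((δT x - (r x - vT x)) * ∑ i, pderiv' d (φ i) i x) := by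
      funext x; ring
    rw [← integral_sub ha hb, ← integral_sub hab hc, hptv, integral_neg]
    have h0 := hδTdef _ hdφmem
    simp only [neg_eq_zero]
    exact h0
  -- Step 7: the boundary residuals vanish
  have hφn : ∀ F : ι, MemPolySpace d k (fun x => ∑ i, φ i x * nF F i) := fun F =>
    memPolySpace_sum Finset.univ fun i _ => (hφ i).mul_const _
  have hbnd0 : ∀ F : ι,
      (∫ x, (δF F x - δT x) * ∑ i, φ i x * nF F i ∂(μF F))
      - ((∫ x, r x * ∑ i, φ i x * nF F i ∂(μF F))
         - (∫ x, vF F x * ∑ i, φ i x * nF F i ∂(μF F))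
         - (∫ x, δT x * ∑ i, φ i x * nF F i ∂(μF F))) = 0 := by
    intro F
    have hφnc : Continuous (fun x => ∑ i, φ i x * nF F i) :=
      continuous_finset_sum _ fun i _ => (hφc i).mul continuous_const
    have h1 := intμ F (fun x => (δF F x - δT x) * ∑ i, φ i x * nF F i) (((hδFc F).sub hδTc).mul hφnc)
    have h2 := intμ F (fun x => r x * ∑ i, φ i x * nF F i) (hrc.mul hφnc)
    have h3 := intμ F (fun x => vF F x * ∑ i, φ i x * nF F i) ((hvFc F).mul hφnc)
    have h4 := intμ F (fun x => δT x * ∑ i, φ i x * nF F i) (hδTc.mul hφnc)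
    have h23 : Integrable
        (fun x => r x * (∑ i, φ i x * nF F i) - vF F x * (∑ i, φ i x * nF F i)) (μF F) :=
      h2.sub h3
    have h234 : Integrable
        (fun x => (r x * (∑ i, φ i x * nF F i) - vF F x * (∑ i, φ i x * nF F i))
          - δT x * (∑ i, φ i x * nF F i)) (μF F) := h23.sub h4
    have hptb : (fun x => (δF F x - δT x) * (∑ i, φ i x * nF F i)
        - ((r x * (∑ i, φ i x * nF F i) - vF F x * (∑ i, φ i x * nF F i))
           - δT x * (∑ i, φ i x * nF F i)))
        = fun x => (δF F x - (r x - vF F x)) * ∑ i, φ i x * nF F i := by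
      funext x; ring
    rw [← integral_sub h2 h3, ← integral_sub h23 h4, ← integral_sub h1 h234, hptb]
    exact hδFdef F _ (hφn F)
  -- Final assembly
  rw [hLsplit]
  rw [Finset.sum_congr rfl fun F _ => ((hstep1 F).2).trans (hLdef F φ hφRT)]
  rw [Finset.sum_add_distrib, Finset.sum_neg_distrib]
  rw [hpart, hexp, hIBPr, hGv, hIBPδ]
  have hsum0 : ∑ F : ι,
      ((∫ x, (δF F x - δT x) * ∑ i, φ i x * nF F i ∂(μF F))
      - ((∫ x, r x * ∑ i, φ i x * nF F i ∂(μF F))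
         - (∫ x, vF F x * ∑ i, φ i x * nF F i ∂(μF F))
         - (∫ x, δT x * ∑ i, φ i x * nF F i ∂(μF F)))) = 0 :=
    Finset.sum_eq_zero fun F _ => hbnd0 F
  rw [Finset.sum_sub_distrib, Finset.sum_sub_distrib, Finset.sum_sub_distrib] at hsum0
  linarith [hvol0, hsum0]
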